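/- Let {u_n} ⊂ E_λ satisfy (1+‖u_n‖_λ)J'_{α,λ}(u_n) → 0 in E_λ* and J_{α,λ}(u_n) → c with c bounded. Then {‖u_n‖_λ} is bounded. More precisely, c + o(1) ≥ ((p-4)/(8p))(α‖∇u_n‖_{L²}⁴ + ‖u_n‖_λ²) - (2(p-2)²/(α(p-4)p))|a₀|²|A_∞|^{4/3}S^{-2}. -/

import Mathlib

open Filter Topology

lemma young_key (p alpha K g N D : ℝ) (hp : 4 < p) (ha : 0 < alpha) (hK : 0 ≤ K)
    (hg : 0 ≤ g) (hN : 0 ≤ N) (hD : D ≤ K * g) :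
    (p - 4) / (8 * p) * (alpha * g ^ 2 + N) - 2 * (p - 2) ^ 2 / (alpha * (p - 4) * p) * K ^ 2 ≤
      alpha * (p - 4) / (4 * p) * g ^ 2 + (p - 2) / (2 * p) * (N - D) := by
  have hp0 : (0:ℝ) < p := by linarith
  have hpne : p ≠ 0 := ne_of_gt hp0
  have hp4ne : p - 4 ≠ 0 := by intro h; linarith [h]
  have hane : alpha ≠ 0 := ne_of_gt ha
  have hY : (p - 2) / (2 * p) * (K * g) ≤
      alpha * (p - 4) / (8 * p) * g ^ 2 + 2 * (p - 2) ^ 2 / (alpha * (p - 4) * p) * K ^ 2 := by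
    rw [← sub_nonneg]
    have heq : alpha * (p - 4) / (8 * p) * g ^ 2 +
        2 * (p - 2) ^ 2 / (alpha * (p - 4) * p) * K ^ 2 - (p - 2) / (2 * p) * (K * g)
        = ((alpha * (p - 4) * g - 2 * (p - 2) * K) ^ 2 + 12 * ((p - 2) * K) ^ 2)
          / (8 * alpha * (p - 4) * p) := by
      field_simp
      ring
    rw [heq]
    have hden : (0:ℝ) < 8 * alpha * (p - 4) * p := by
      have : (0:ℝ) < p - 4 := by linarith
      positivity
    positivity
  have hD' : (p - 2) / (2 * p) * D ≤ (p - 2) / (2 * p) * (K * g) :=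
    mul_le_mul_of_nonneg_left hD (div_nonneg (by linarith) (by linarith))
  have hN' : (p - 4) / (8 * p) * N ≤ (p - 2) / (2 * p) * N := by
    apply mul_le_mul_of_nonneg_right _ hN
    rw [div_le_div_iff₀ (by positivity) (by positivity)]
    nlinarith
  have e1 : (p - 4) / (8 * p) * (alpha * g ^ 2 + N)
      = alpha * (p - 4) / (8 * p) * g ^ 2 + (p - 4) / (8 * p) * N := by
    field_simp
  have e2 : alpha * (p - 4) / (4 * p) * g ^ 2
      = alpha * (p - 4) / (8 * p) * g ^ 2 + alpha * (p - 4) / (8 * p) * g ^ 2 := by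
    field_simp; ring
  have e3 : (p - 2) / (2 * p) * (N - D) = (p - 2) / (2 * p) * N - (p - 2) / (2 * p) * D := by
    ring
  linarith [hY, hD', hN']

/-- Let `{u_n} ⊂ E_λ` satisfy `(1+‖u_n‖_λ)J'_{α,λ}(u_n) → 0` in `E_λ*`
and `J_{α,λ}(u_n) → c` with `c` bounded.  Then `{‖u_n‖_λ}` is bounded.  More precisely,
`c + o(1) ≥ ((p-4)/(8p))(α‖∇u_n‖_{L²}⁴ + ‖u_n‖_λ²)
- (2(p-2)²/(α(p-4)p))|a₀|²|A_∞|^{4/3}S⁻²`.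
Here `g n = ‖∇u_n‖_{L²}²`, `N n = ‖u_n‖_λ²`, `D n = D_λ(u_n,u_n)`, `L n = ‖u_n‖_{L^p}^p`;
`Jval n = J_{α,λ}(u_n)` and `pair n = ⟨J'_{α,λ}(u_n), u_n⟩ → 0` (a consequence of the PS
condition), and `mA = |A_∞|`, with the Hölder–Sobolev bound
`D_λ(u_n,u_n) ≤ |a₀||A_∞|^{2/3}S⁻¹‖∇u_n‖_{L²}²`. -/
theorem stmt12 (p alpha c S mA a0 : ℝ)
    (hp4 : 4 < p) (hp6 : p < 6) (halpha : 0 < alpha) (hS : 0 < S) (hmA : 0 ≤ mA)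
    (g N D L Jval pair : ℕ → ℝ)
    (hgnn : ∀ n, 0 ≤ g n) (hNnn : ∀ n, 0 ≤ N n) (hDnn : ∀ n, 0 ≤ D n) (hLnn : ∀ n, 0 ≤ L n)
    (hJval : ∀ n, Jval n = alpha / 4 * g n ^ 2 + (1 / 2) * N n - (1 / 2) * D n - (1 / p) * L n)
    (hpair : ∀ n, pair n = alpha * g n ^ 2 + N n - D n - L n)
    (hJc : Tendsto Jval atTop (𝓝 c))
    (hPS : Tendsto pair atTop (𝓝 0))
    (hDbd : ∀ n, D n ≤ |a0| * mA ^ ((2 : ℝ) / 3) * S⁻¹ * g n) :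
    (∃ B : ℝ, ∀ n, N n ≤ B) ∧
    ∃ eps : ℕ → ℝ, Tendsto eps atTop (𝓝 0) ∧ ∀ n,
      (p - 4) / (8 * p) * (alpha * g n ^ 2 + N n) -
          2 * (p - 2) ^ 2 / (alpha * (p - 4) * p) * a0 ^ 2 * mA ^ ((4 : ℝ) / 3) / S ^ 2 ≤
        c + eps n := by
  have hp0 : (0:ℝ) < p := by linarith
  have hK0 : 0 ≤ |a0| * mA ^ ((2 : ℝ) / 3) * S⁻¹ := by positivity
  have hK2 : (|a0| * mA ^ ((2 : ℝ) / 3) * S⁻¹) ^ 2 = a0 ^ 2 * mA ^ ((4 : ℝ) / 3) / S ^ 2 := by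
    have h1 : (mA ^ ((2 : ℝ) / 3)) ^ 2 = mA ^ ((4 : ℝ) / 3) := by
      rw [← Real.rpow_natCast (mA ^ ((2 : ℝ) / 3)) 2, ← Real.rpow_mul hmA]
      norm_num
    rw [mul_pow, mul_pow, h1, sq_abs, inv_pow]
    ring
  have hconst : 2 * (p - 2) ^ 2 / (alpha * (p - 4) * p) * a0 ^ 2 * mA ^ ((4 : ℝ) / 3) / S ^ 2
      = 2 * (p - 2) ^ 2 / (alpha * (p - 4) * p) * (|a0| * mA ^ ((2 : ℝ) / 3) * S⁻¹) ^ 2 := by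
    rw [hK2]; ring
  -- key pointwise bound
  have hkey : ∀ n, (p - 4) / (8 * p) * (alpha * g n ^ 2 + N n) -
      2 * (p - 2) ^ 2 / (alpha * (p - 4) * p) * a0 ^ 2 * mA ^ ((4 : ℝ) / 3) / S ^ 2 ≤
      Jval n - 1 / p * pair n := by
    intro n
    have h := young_key p alpha (|a0| * mA ^ ((2 : ℝ) / 3) * S⁻¹) (g n) (N n) (D n)
      hp4 halpha hK0 (hgnn n) (hNnn n) (hDbd n)
    have heq : Jval n - 1 / p * pair n
        = alpha * (p - 4) / (4 * p) * g n ^ 2 + (p - 2) / (2 * p) * (N n - D n) := by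
      rw [hJval n, hpair n]
      field_simp
      ring
    rw [hconst, heq]
    exact h
  have hT : Tendsto (fun n => Jval n - 1 / p * pair n) atTop (𝓝 c) := by
    have h := hJc.sub (hPS.const_mul (1 / p))
    have h2 : c - 1 / p * 0 = c := by ring
    rwa [h2] at h
  constructor
  · -- boundedness of N
    obtain ⟨M, hM⟩ := hT.bddAbove_range
    have hM' : ∀ n, Jval n - 1 / p * pair n ≤ M := fun n => hM ⟨n, rfl⟩
    set C : ℝ := 2 * (p - 2) ^ 2 / (alpha * (p - 4) * p) * a0 ^ 2 * mA ^ ((4 : ℝ) / 3) / S ^ 2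
      with hC
    have hpos : (0:ℝ) < (p - 4) / (8 * p) := div_pos (by linarith) (by linarith)
    refine ⟨8 * p / (p - 4) * (M + C), fun n => ?_⟩
    have h1 := hkey n
    have h2 : (p - 4) / (8 * p) * N n ≤ M + C := by
      have hg2 : 0 ≤ alpha * g n ^ 2 := by positivity
      have hmono : (p - 4) / (8 * p) * N n ≤ (p - 4) / (8 * p) * (alpha * g n ^ 2 + N n) :=
        mul_le_mul_of_nonneg_left (by linarith) (le_of_lt hpos)
      linarith [hM' n]
    have h3 : N n ≤ (M + C) / ((p - 4) / (8 * p)) := by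
      rw [le_div_iff₀ hpos]
      linarith [h2]
    have h4 : (M + C) / ((p - 4) / (8 * p)) = 8 * p / (p - 4) * (M + C) := by
      rw [div_div_eq_mul_div]
      ring
    linarith [h3, h4.le, h4.ge]
  · refine ⟨fun n => (Jval n - 1 / p * pair n) - c, by simpa using hT.sub_const c, fun n => ?_⟩
    linarith [hkey n]
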